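/- Let K be a field, n a positive integer, A ∈ Mₙ(K), and set T := fromBlocks 0 A (−A^⋆) 0, a 2n×2n matrix. If T is regular (its minimal polynomial equals its characteristic polynomial), then both of the n×n matrices A·A^⋆ and A^⋆·A are regular. -/
import Mathlib

open Polynomial Matrix

/-- The `n × n` antidiagonal permutation matrix `J`: with 1-based indexing,
`J i j = 1` if `i + j = n + 1` and `0` otherwise. -/
def antidiagJ (R : Type*) [CommRing R] (n : ℕ) : Matrix (Fin n) (Fin n) R :=
  Matrix.of fun i j => if (i : ℕ) + (j : ℕ) + 2 = n + 1 then 1 else 0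

/-- The reflection `M^⋆ = J * Mᵀ * J` of a square matrix about its antidiagonal. -/
def astar {R : Type*} [CommRing R] {n : ℕ} (M : Matrix (Fin n) (Fin n) R) :
    Matrix (Fin n) (Fin n) R :=
  antidiagJ R n * Mᵀ * antidiagJ R n

section Aux

variable {K : Type*} [Field K] {n : ℕ}

lemma fromBlocks_diag_pow (P Q : Matrix (Fin n) (Fin n) K) (k : ℕ) :
    (Matrix.fromBlocks P 0 0 Q) ^ k = Matrix.fromBlocks (P ^ k) 0 0 (Q ^ k) := by
  induction k with
  | zero => simp [Matrix.fromBlocks_one]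
  | succ k ih => rw [pow_succ, pow_succ, pow_succ, ih, Matrix.fromBlocks_multiply]; simp

lemma aeval_fromBlocks_diag (P Q : Matrix (Fin n) (Fin n) K) (p : K[X]) :
    aeval (Matrix.fromBlocks P 0 0 Q) p
      = Matrix.fromBlocks (aeval P p) 0 0 (aeval Q p) := by
  induction p using Polynomial.induction_on' with
  | add p q hp hq =>
    rw [map_add, map_add, map_add, hp, hq, Matrix.fromBlocks_add]; simp
  | monomial k a =>
    simp only [aeval_monomial]
    rw [fromBlocks_diag_pow,
      show (algebraMap K (Matrix (Fin n ⊕ Fin n) (Fin n ⊕ Fin n) K)) a = a • 1 from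
        Algebra.algebraMap_eq_smul_one a,
      show (algebraMap K (Matrix (Fin n) (Fin n) K)) a = a • 1 from
        Algebra.algebraMap_eq_smul_one a, smul_mul_assoc, smul_mul_assoc, smul_mul_assoc,
      one_mul, one_mul, one_mul, Matrix.fromBlocks_smul]
    simp

lemma intertwine_pow {A P Q : Matrix (Fin n) (Fin n) K} (h : P * A = A * Q) (k : ℕ) :
    P ^ k * A = A * Q ^ k := by
  induction k with
  | zero => simp
  | succ k ih =>
    calc P ^ k * P * A = P ^ k * (A * Q) := by rw [mul_assoc, h]
    _ = A * Q ^ k * Q := by rw [← mul_assoc, ih]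
    _ = A * (Q ^ k * Q) := by rw [mul_assoc]

lemma intertwine_aeval {A P Q : Matrix (Fin n) (Fin n) K} (h : P * A = A * Q) (p : K[X]) :
    aeval P p * A = A * aeval Q p := by
  induction p using Polynomial.induction_on' with
  | add p q hp hq => rw [map_add, map_add, add_mul, mul_add, hp, hq]
  | monomial k a =>
    simp only [aeval_monomial, Algebra.algebraMap_eq_smul_one, smul_mul_assoc, one_mul,
      mul_smul_comm]
    rw [intertwine_pow h]

end Aux

section Key

variable {K : Type*} [Field K] {n : ℕ}

lemma key (_hn : 0 < n) (M : Matrix (Fin n) (Fin n) K)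
    (T : Matrix (Fin n ⊕ Fin n) (Fin n ⊕ Fin n) K)
    (hT : minpoly K T = T.charpoly)
    (h0 : aeval T (X * (minpoly K M).comp (-(X ^ 2))) = 0) :
    minpoly K M = M.charpoly := by
  set m := minpoly K M with hm
  have hmonic : m.Monic := minpoly.monic (Matrix.isIntegral M)
  have hq2 : (-(X ^ 2) : K[X]).natDegree = 2 := by
    rw [natDegree_neg, natDegree_X_pow]
  have hcompne : m.comp (-(X ^ 2)) ≠ 0 := by
    intro h
    have hl := Polynomial.leadingCoeff_comp (p := m) (q := (-(X ^ 2) : K[X])) (by omega)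
    rw [h, leadingCoeff_zero, hmonic.leadingCoeff] at hl
    simp only [one_mul] at hl
    rw [show ((-(X ^ 2) : K[X])).leadingCoeff = -1 by simp [leadingCoeff_neg]] at hl
    exact pow_ne_zero m.natDegree (by norm_num : (-1 : K) ≠ 0) hl.symm
  have hsne : X * m.comp (-(X ^ 2)) ≠ 0 := mul_ne_zero X_ne_zero hcompne
  have hdvd : minpoly K T ∣ X * m.comp (-(X ^ 2)) := minpoly.dvd K T h0
  have hTdeg : (minpoly K T).natDegree = n + n := by
    rw [hT, Matrix.charpoly_natDegree_eq_dim]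
    simp
  have hle : n + n ≤ (X * m.comp (-(X ^ 2))).natDegree :=
    hTdeg ▸ Polynomial.natDegree_le_of_dvd hdvd hsne
  rw [natDegree_mul X_ne_zero hcompne, natDegree_X, natDegree_comp, hq2] at hle
  have hmd : m.natDegree ≤ n := by
    have := Polynomial.natDegree_le_of_dvd (Matrix.minpoly_dvd_charpoly M)
      (Matrix.charpoly_monic M).ne_zero
    rwa [Matrix.charpoly_natDegree_eq_dim, Fintype.card_fin] at this
  have hnd : n ≤ m.natDegree := by omega
  have := Polynomial.eq_of_monic_of_dvd_of_natDegree_le hmonic (Matrix.charpoly_monic M)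
    (Matrix.minpoly_dvd_charpoly M)
    (by rw [Matrix.charpoly_natDegree_eq_dim, Fintype.card_fin]; exact hnd)
  exact this.symm

end Key

/-- If `T = fromBlocks 0 A (−A^⋆) 0` is regular (its minimal polynomial equals its
characteristic polynomial), then both `A·A^⋆` and `A^⋆·A` are regular. -/
theorem regular_of_fromBlocks_regular (K : Type*) [Field K] (n : ℕ) (hn : 0 < n)
    (A : Matrix (Fin n) (Fin n) K)
    (hT : minpoly K (Matrix.fromBlocks 0 A (-(astar A)) 0) =
      (Matrix.fromBlocks 0 A (-(astar A)) 0).charpoly) :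
    minpoly K (A * astar A) = (A * astar A).charpoly ∧
    minpoly K (astar A * A) = (astar A * A).charpoly := by
  set A' := astar A with hA'
  set T := Matrix.fromBlocks 0 A (-A') 0 with hTdef
  have hsq : aeval T (-(X ^ 2) : K[X]) = Matrix.fromBlocks (A * A') 0 0 (A' * A) := by
    have hTT : T * T = Matrix.fromBlocks (-(A * A')) 0 0 (-(A' * A)) := by
      rw [hTdef, Matrix.fromBlocks_multiply]
      simp
    rw [map_neg, map_pow, aeval_X, pow_two, hTT, Matrix.fromBlocks_neg]
    simp
  have hBA : (A * A') * A = A * (A' * A) := by rw [mul_assoc]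
  have hCA : (A' * A) * A' = A' * (A * A') := by rw [mul_assoc]
  constructor
  · apply key hn _ T hT
    rw [_root_.map_mul, aeval_X, aeval_comp, hsq, aeval_fromBlocks_diag,
      minpoly.aeval K (A * A'), hTdef, Matrix.fromBlocks_multiply]
    have hz : A * aeval (A' * A) (minpoly K (A * A')) = 0 := by
      rw [← intertwine_aeval hBA, minpoly.aeval, zero_mul]
    simp [hz]
  · apply key hn _ T hT
    rw [_root_.map_mul, aeval_X, aeval_comp, hsq, aeval_fromBlocks_diag,
      minpoly.aeval K (A' * A), hTdef, Matrix.fromBlocks_multiply]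
    have hz : A' * aeval (A * A') (minpoly K (A' * A)) = 0 := by
      rw [← intertwine_aeval hCA, minpoly.aeval, zero_mul]
    simp [hz]
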